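/- Let x be a tropical Plücker vector of rank d on [n] and let D be the regular subdivision of the hypersimplex Δ(d,n) induced by lifting e_I to x_I. Then every edge of D is an edge of Δ(d,n); i.e., every internal edge [e_I, e_J] of a regular subdivision of Δ(d,n) with I ≠ J, |I∖J| ≥ 2, is forbidden by the three-term tropical Plücker relations. -/

import Mathlib

open Finset

/-- The 0/1 indicator vector `e_I ∈ ℝⁿ` of a subset `I ⊆ [n]`. -/
def eInd {n : ℕ} (I : Finset (Fin n)) : Fin n → ℝ := fun i => if i ∈ I then 1 else 0

/-- The minimum of `f` over the finite set `s` is attained at least twice. -/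
def MinTwiceOn {α : Type*} [DecidableEq α] (s : Finset α) (f : α → ℝ) : Prop :=
  ∃ a ∈ s, ∃ b ∈ s, a ≠ b ∧ f a = f b ∧ ∀ c ∈ s, f a ≤ f c

/-- The minimum of the three reals `a`, `b`, `c` is attained at least twice. -/
def ThreeMinTwice (a b c : ℝ) : Prop :=
  (a = b ∧ a ≤ c) ∨ (a = c ∧ a ≤ b) ∨ (b = c ∧ b ≤ a)

/-- `x` is a tropical Plücker vector of rank `d` on `[n]`: for every `S` of size `d-2`
and distinct `i,j,k,l ∉ S`, the minimum of the three pairwise sums is attained twice. -/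
def TropPlucker (n d : ℕ) (x : Finset (Fin n) → ℝ) : Prop :=
  ∀ (S : Finset (Fin n)) (i j k l : Fin n),
    S.card = d - 2 → i ∉ S → j ∉ S → k ∉ S → l ∉ S →
    i ≠ j → i ≠ k → i ≠ l → j ≠ k → j ≠ l → k ≠ l →
    ThreeMinTwice
      (x (S ∪ {i, j}) + x (S ∪ {k, l}))
      (x (S ∪ {i, k}) + x (S ∪ {j, l}))
      (x (S ∪ {i, l}) + x (S ∪ {j, k}))

/-- The linear functional on `ℝⁿ` with covector `a`. -/
def lin {n : ℕ} (a : Fin n → ℝ) (z : Fin n → ℝ) : ℝ := ∑ i, a i * z i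

/-- `[u,v]` is an edge of the polytope with (finite) vertex set `V`: some linear
functional attains its maximum over `V` exactly at `u` and `v`, `u ≠ v`. -/
def IsEdge {n : ℕ} (V : Set (Fin n → ℝ)) (u v : Fin n → ℝ) : Prop :=
  u ∈ V ∧ v ∈ V ∧ u ≠ v ∧
  ∃ a : Fin n → ℝ, (∀ z ∈ V, lin a z ≤ lin a u) ∧ lin a u = lin a v ∧
    ∀ z ∈ V, lin a z = lin a u → z = u ∨ z = v

/-- `[u,v]` is a 1-cell of the regular subdivision of the polytope with vertex set `V`
induced by the weights `w`: some affine functional `z ↦ lin a z + c` is dominated by `w`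
on `V` and touches `w` exactly at `u` and `v`, `u ≠ v`. -/
def IsCellEdge {n : ℕ} (V : Set (Fin n → ℝ)) (w : (Fin n → ℝ) → ℝ)
    (u v : Fin n → ℝ) : Prop :=
  u ∈ V ∧ v ∈ V ∧ u ≠ v ∧
  ∃ (a : Fin n → ℝ) (c : ℝ), (∀ z ∈ V, lin a z + c ≤ w z) ∧
    lin a u + c = w u ∧ lin a v + c = w v ∧
    ∀ z ∈ V, lin a z + c = w z → z = u ∨ z = v

/-- The vertex set of `Δ(p,q;n)`: all indicator vectors `e_K` with `|K| ∈ {p,q}`. -/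
def DeltaVerts (n p q : ℕ) : Set (Fin n → ℝ) :=
  {v | ∃ K : Finset (Fin n), (K.card = p ∨ K.card = q) ∧ v = eInd K}

/-- The vertex set of the face `Δ_{S,T}`: the vectors `e_{S∪{i}}` and `e_{T∖{i}}`
for `i ∈ T∖S`. -/
def DeltaSTVerts {n : ℕ} (S T : Finset (Fin n)) : Set (Fin n → ℝ) :=
  {v | ∃ i ∈ T \ S, v = eInd (insert i S) ∨ v = eInd (T.erase i)}

/-- The vertex set of the cross-polytope `P_n`: `{±e_i : i ∈ [n]}`. -/
def CrossVerts (n : ℕ) : Set (Fin n → ℝ) :=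
  {v | ∃ i : Fin n, v = eInd {i} ∨ v = -(eInd {i})}

/-- `M'` is a quotient of `M` (the matroids are concordant):
every flat of `M'` is a flat of `M`. -/
def MatroidQuotient {α : Type*} (M' M : Matroid α) : Prop :=
  ∀ F : Set α, M'.IsFlat F → M.IsFlat F

-- auxiliary lemmas
lemma tmt_shift {a b c t : ℝ} (h : ThreeMinTwice a b c) :
    ThreeMinTwice (a - t) (b - t) (c - t) := by
  rcases h with ⟨h1, h2⟩ | ⟨h1, h2⟩ | ⟨h1, h2⟩
  · exact Or.inl ⟨by linarith, by linarith⟩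
  · exact Or.inr (Or.inl ⟨by linarith, by linarith⟩)
  · exact Or.inr (Or.inr ⟨by linarith, by linarith⟩)

lemma tmt_min_le {a b c : ℝ} (h : ThreeMinTwice a b c) : min a c ≤ b := by
  rcases h with ⟨h1, h2⟩ | ⟨h1, h2⟩ | ⟨h1, h2⟩
  · exact le_trans (min_le_left _ _) h1.le
  · exact le_trans (min_le_left _ _) h2
  · exact le_trans (min_le_right _ _) h1.ge

lemma lin_eInd {n : ℕ} (a : Fin n → ℝ) (K : Finset (Fin n)) :
    lin a (eInd K) = ∑ p ∈ K, a p := by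
  unfold lin eInd
  simp [mul_ite]

lemma eInd_inj {n : ℕ} {K L : Finset (Fin n)} (h : eInd K = eInd L) : K = L := by
  ext t
  have := congrFun h t
  unfold eInd at this
  by_cases h1 : t ∈ K <;> by_cases h2 : t ∈ L <;> simp_all

lemma union_pair {n : ℕ} (S : Finset (Fin n)) (p q : Fin n) :
    S ∪ {p, q} = insert p (insert q S) := by
  ext t; simp [Finset.mem_union, Finset.mem_insert]

lemma lin_eInd_pair {n : ℕ} (a : Fin n → ℝ) (S : Finset (Fin n)) (p q : Fin n)
    (hp : p ∉ S) (hq : q ∉ S) (hpq : p ≠ q) :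
    lin a (eInd (S ∪ {p, q})) = (∑ t ∈ S, a t) + a p + a q := by
  rw [lin_eInd, union_pair, Finset.sum_insert, Finset.sum_insert hq]
  · ring
  · simp [Finset.mem_insert, hp, hpq]

/-- The key exchange lemma: three-term Plücker relations imply the valuated
exchange property, by induction on `|A \ B|`. -/
lemma exchange {n d : ℕ} (y : Finset (Fin n) → ℝ) (hy : TropPlucker n d y) :
    ∀ m : ℕ, ∀ A B : Finset (Fin n), A.card = d → B.card = d → (A \ B).card = m →
      ∀ i ∈ A \ B, ∃ j ∈ B \ A,
        y (insert j (A.erase i)) + y (insert i (B.erase j)) ≤ y A + y B := by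
  intro m
  induction m using Nat.strong_induction_on with
  | _ m IH =>
  intro A B hA hB hm i hi
  obtain ⟨hiA, hiB⟩ := Finset.mem_sdiff.mp hi
  have hcardBA : (B \ A).card = m := by
    rw [← hm]; exact (Finset.card_sdiff_comm (hB.trans hA.symm)).symm ▸ rfl
  by_cases hm1 : m ≤ 1
  · -- base case : m = 1
    have hm' : m = 1 := by
      have : 0 < m := by
        rw [← hm]; exact Finset.card_pos.mpr ⟨i, hi⟩
      omega
    have hAB1 : A \ B = {i} := by
      rw [hm'] at hm
      obtain ⟨z, hz⟩ := Finset.card_eq_one.mp hm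
      rw [hz] at hi ⊢
      simp at hi; rw [hi]
    obtain ⟨j, hj⟩ := Finset.card_eq_one.mp (hcardBA.trans hm')
    refine ⟨j, by rw [hj]; exact Finset.mem_singleton_self j, ?_⟩
    have hjB : j ∈ B := (Finset.mem_sdiff.mp (hj ▸ Finset.mem_singleton_self j)).1
    have hjA : j ∉ A := (Finset.mem_sdiff.mp (hj ▸ Finset.mem_singleton_self j)).2
    have hABm : ∀ t, t ∈ A → t ∉ B → t = i := by
      intro t ht htB
      have : t ∈ A \ B := Finset.mem_sdiff.mpr ⟨ht, htB⟩
      rw [hAB1] at this; simpa using this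
    have hBAm : ∀ t, t ∈ B → t ∉ A → t = j := by
      intro t ht htA
      have : t ∈ B \ A := Finset.mem_sdiff.mpr ⟨ht, htA⟩
      rw [hj] at this; simpa using this
    have h1 : insert j (A.erase i) = B := by
      ext t
      simp only [Finset.mem_insert, Finset.mem_erase]
      constructor
      · rintro (rfl | ⟨hti, htA⟩)
        · exact hjB
        · by_contra htB; exact hti (hABm t htA htB)
      · intro htB
        by_cases htA : t ∈ A
        · exact Or.inr ⟨fun h => hiB (h ▸ htB), htA⟩
        · exact Or.inl (hBAm t htB htA)
    have h2 : insert i (B.erase j) = A := by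
      ext t
      simp only [Finset.mem_insert, Finset.mem_erase]
      constructor
      · rintro (rfl | ⟨htj, htB⟩)
        · exact hiA
        · by_contra htA; exact htj (hBAm t htB htA)
      · intro htA
        by_cases htB : t ∈ B
        · exact Or.inr ⟨fun h => hjA (h ▸ htA), htB⟩
        · exact Or.inl (hABm t htA htB)
    rw [h1, h2]; linarith
  · -- inductive step : m ≥ 2
    push_neg at hm1
    -- pick k ∈ A \ B with k ≠ i
    have hne : ((A \ B).erase i).Nonempty := by
      rw [← Finset.card_pos, Finset.card_erase_of_mem hi, hm]; omega
    obtain ⟨k, hk⟩ := hne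
    have hkne : k ≠ i := (Finset.mem_erase.mp hk).1
    obtain ⟨hkA, hkB⟩ := Finset.mem_sdiff.mp (Finset.mem_erase.mp hk).2
    -- pick l ∈ B \ A minimizing y (insert l (A.erase k)) + y (insert i (B.erase l))
    have hBAne : (B \ A).Nonempty := by
      rw [← Finset.card_pos, hcardBA]; omega
    obtain ⟨l, hlBA, hlmin⟩ := (B \ A).exists_min_image
      (fun t => y (insert t (A.erase k)) + y (insert i (B.erase t))) hBAne
    obtain ⟨hlB, hlA⟩ := Finset.mem_sdiff.mp hlBA
    set A' : Finset (Fin n) := insert l (A.erase k) with hA'def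
    have hlAe : l ∉ A.erase k := fun h => hlA (Finset.mem_of_mem_erase h)
    have hA' : A'.card = d := by
      rw [hA'def, Finset.card_insert_of_notMem hlAe, Finset.card_erase_of_mem hkA, hA]
      have : 1 ≤ d := by
        rw [← hA]; exact Finset.card_pos.mpr ⟨i, hiA⟩
      omega
    have hA'B : A' \ B = (A \ B).erase k := by
      ext t
      simp only [hA'def, Finset.mem_sdiff, Finset.mem_insert, Finset.mem_erase]
      constructor
      · rintro ⟨rfl | ⟨htk, htA⟩, htB⟩
        · exact absurd hlB htB
        · exact ⟨htk, htA, htB⟩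
      · rintro ⟨htk, htA, htB⟩
        exact ⟨Or.inr ⟨htk, htA⟩, htB⟩
    have hmA'B : (A' \ B).card = m - 1 := by
      rw [hA'B, Finset.card_erase_of_mem (Finset.mem_sdiff.mpr ⟨hkA, hkB⟩), hm]
    have hiA'B : i ∈ A' \ B := by
      rw [hA'B]
      exact Finset.mem_erase.mpr ⟨fun h => hkne h.symm, hi⟩
    obtain ⟨j, hjBA', hIH⟩ := IH (m - 1) (by omega) A' B hA' hB hmA'B i hiA'B
    obtain ⟨hjB, hjA'⟩ := Finset.mem_sdiff.mp hjBA'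
    have hjk : j ≠ k := fun h => hkB (h ▸ hjB)
    have hjA : j ∉ A := fun h => hjA' (Finset.mem_insert_of_mem (Finset.mem_erase.mpr ⟨hjk, h⟩))
    have hjl : j ≠ l := fun h => hjA' (h ▸ Finset.mem_insert_self l _)
    have hjBA : j ∈ B \ A := Finset.mem_sdiff.mpr ⟨hjB, hjA⟩
    -- set up the three-term relation
    set S : Finset (Fin n) := (A.erase i).erase k with hSdef
    have hSsub : S ⊆ A := fun t ht =>
      Finset.mem_of_mem_erase (Finset.mem_of_mem_erase ht)
    have hiS : i ∉ S := fun h => (Finset.mem_erase.mp (Finset.mem_of_mem_erase h)).1 rfl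
    have hkS : k ∉ S := fun h => (Finset.mem_erase.mp h).1 rfl
    have hjS : j ∉ S := fun h => hjA (hSsub h)
    have hlS : l ∉ S := fun h => hlA (hSsub h)
    have hij : i ≠ j := fun h => hjA (h ▸ hiA)
    have hik : i ≠ k := hkne.symm
    have hil : i ≠ l := fun h => hlA (h ▸ hiA)
    have hkl : k ≠ l := fun h => hlA (h ▸ hkA)
    have hScard : S.card = d - 2 := by
      rw [hSdef, Finset.card_erase_of_mem (Finset.mem_erase.mpr ⟨hkne, hkA⟩),
        Finset.card_erase_of_mem hiA, hA]
      omega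
    have hrel := hy S i j k l hScard hiS hjS hkS hlS hij hik hil hjk hjl hkl
    -- set identifications
    have eik : S ∪ {i, k} = A := by
      rw [union_pair]
      ext t
      simp only [hSdef, Finset.mem_insert, Finset.mem_erase]
      constructor
      · rintro (rfl | rfl | ⟨htk, hti, htA⟩)
        · exact hiA
        · exact hkA
        · exact htA
      · intro htA
        by_cases h1 : t = i
        · exact Or.inl h1
        by_cases h2 : t = k
        · exact Or.inr (Or.inl h2)
        · exact Or.inr (Or.inr ⟨h2, h1, htA⟩)
    have eil : S ∪ {i, l} = A' := by
      rw [union_pair, hA'def, hSdef]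
      ext t
      simp only [Finset.mem_insert, Finset.mem_erase]
      constructor
      · rintro (rfl | rfl | ⟨htk, hti, htA⟩)
        · exact Or.inr ⟨hik, hiA⟩
        · exact Or.inl rfl
        · exact Or.inr ⟨htk, htA⟩
      · rintro (rfl | ⟨htk, htA⟩)
        · exact Or.inr (Or.inl rfl)
        · by_cases h1 : t = i
          · exact Or.inl h1
          · exact Or.inr (Or.inr ⟨htk, h1, htA⟩)
    have ejl : S ∪ {j, l} = insert j (A'.erase i) := by
      rw [union_pair, hA'def, hSdef]
      ext t
      simp only [Finset.mem_insert, Finset.mem_erase]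
      constructor
      · rintro (rfl | rfl | ⟨htk, hti, htA⟩)
        · exact Or.inl rfl
        · exact Or.inr ⟨hil.symm, Or.inl rfl⟩
        · exact Or.inr ⟨hti, Or.inr ⟨htk, htA⟩⟩
      · rintro (rfl | ⟨hti, rfl | ⟨htk, htA⟩⟩)
        · exact Or.inl rfl
        · exact Or.inr (Or.inl rfl)
        · exact Or.inr (Or.inr ⟨htk, hti, htA⟩)
    have ejk : S ∪ {j, k} = insert j (A.erase i) := by
      rw [union_pair, hSdef]
      ext t
      simp only [Finset.mem_insert, Finset.mem_erase]
      constructor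
      · rintro (rfl | rfl | ⟨htk, hti, htA⟩)
        · exact Or.inl rfl
        · exact Or.inr ⟨hik.symm, hkA⟩
        · exact Or.inr ⟨hti, htA⟩
      · rintro (rfl | ⟨hti, htA⟩)
        · exact Or.inl rfl
        · by_cases h2 : t = k
          · exact Or.inr (Or.inl h2)
          · exact Or.inr (Or.inr ⟨h2, hti, htA⟩)
    have eij : S ∪ {i, j} = insert j (A.erase k) := by
      rw [union_pair, hSdef]
      ext t
      simp only [Finset.mem_insert, Finset.mem_erase]
      constructor
      · rintro (rfl | rfl | ⟨htk, hti, htA⟩)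
        · exact Or.inr ⟨hik, hiA⟩
        · exact Or.inl rfl
        · exact Or.inr ⟨htk, htA⟩
      · rintro (rfl | ⟨htk, htA⟩)
        · exact Or.inr (Or.inl rfl)
        · by_cases h1 : t = i
          · exact Or.inl h1
          · exact Or.inr (Or.inr ⟨htk, h1, htA⟩)
    have ekl : S ∪ {k, l} = insert l (A.erase i) := by
      rw [union_pair, hSdef]
      ext t
      simp only [Finset.mem_insert, Finset.mem_erase]
      constructor
      · rintro (rfl | rfl | ⟨htk, hti, htA⟩)
        · exact Or.inr ⟨hkne, hkA⟩
        · exact Or.inl rfl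
        · exact Or.inr ⟨hti, htA⟩
      · rintro (rfl | ⟨hti, htA⟩)
        · exact Or.inr (Or.inl rfl)
        · by_cases h2 : t = k
          · exact Or.inl h2
          · exact Or.inr (Or.inr ⟨h2, hti, htA⟩)
    rw [eij, ekl, eik, ejl, eil, ejk] at hrel
    have hmin := tmt_min_le hrel
    rw [min_le_iff] at hmin
    -- minimality of l applied at j
    have hminl := hlmin j hjBA
    rcases hmin with hcase | hcase
    · -- T1 case: use l
      refine ⟨l, hlBA, ?_⟩
      linarith
    · -- T3 case: use j
      refine ⟨j, hjBA, ?_⟩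
      linarith

/-- if `x` is a tropical Plücker vector of rank `d` on `[n]`, then every
edge `[e_I, e_J]` of the regular subdivision of the hypersimplex `Δ(d,n)` induced by
lifting `e_I` to `x_I` is an edge of `Δ(d,n)`, i.e. satisfies `|I∖J| = 1`. -/
theorem statement19 (n d : ℕ) (hd : 2 ≤ d) (hdn : d ≤ n)
    (x : Finset (Fin n) → ℝ) (hx : TropPlucker n d x)
    (W : (Fin n → ℝ) → ℝ)
    (hW : ∀ I : Finset (Fin n), I.card = d → W (eInd I) = x I) :
    ∀ I J : Finset (Fin n), I.card = d → J.card = d →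
      IsCellEdge {v : Fin n → ℝ | ∃ K : Finset (Fin n), K.card = d ∧ v = eInd K}
        W (eInd I) (eInd J) →
      (I \ J).card = 1 := by
  intro I J hI hJ hedge
  obtain ⟨hIV, hJV, hne, a, c, hdom, huI, hvJ, huniq⟩ := hedge
  set y : Finset (Fin n) → ℝ := fun K => x K - (lin a (eInd K) + c) with hydef
  -- y is a tropical Plücker vector
  have hyP : TropPlucker n d y := by
    intro S i j k l hS hiS hjS hkS hlS hij hik hil hjk hjl hkl
    have hrel := hx S i j k l hS hiS hjS hkS hlS hij hik hil hjk hjl hkl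
    have e1 : y (S ∪ {i, j}) + y (S ∪ {k, l}) =
        (x (S ∪ {i, j}) + x (S ∪ {k, l})) -
          (2 * (∑ t ∈ S, a t) + (a i + a j + a k + a l) + 2 * c) := by
      simp only [hydef, lin_eInd_pair a S i j hiS hjS hij,
        lin_eInd_pair a S k l hkS hlS hkl]
      ring
    have e2 : y (S ∪ {i, k}) + y (S ∪ {j, l}) =
        (x (S ∪ {i, k}) + x (S ∪ {j, l})) -
          (2 * (∑ t ∈ S, a t) + (a i + a j + a k + a l) + 2 * c) := by
      simp only [hydef, lin_eInd_pair a S i k hiS hkS hik,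
        lin_eInd_pair a S j l hjS hlS hjl]
      ring
    have e3 : y (S ∪ {i, l}) + y (S ∪ {j, k}) =
        (x (S ∪ {i, l}) + x (S ∪ {j, k})) -
          (2 * (∑ t ∈ S, a t) + (a i + a j + a k + a l) + 2 * c) := by
      simp only [hydef, lin_eInd_pair a S i l hiS hlS hil,
        lin_eInd_pair a S j k hjS hkS hjk]
      ring
    rw [e1, e2, e3]
    exact tmt_shift hrel
  -- nonnegativity of y on d-sets
  have ynn : ∀ K : Finset (Fin n), K.card = d → 0 ≤ y K := by
    intro K hK
    have := hdom (eInd K) ⟨K, hK, rfl⟩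
    rw [hW K hK] at this
    simp only [hydef]
    linarith
  -- y vanishes on I and J
  have hyI : y I = 0 := by
    rw [hW I hI] at huI
    simp only [hydef]
    linarith
  have hyJ : y J = 0 := by
    rw [hW J hJ] at hvJ
    simp only [hydef]
    linarith
  -- the only zeros of y among d-sets are I and J
  have yzero : ∀ K : Finset (Fin n), K.card = d → y K = 0 → K = I ∨ K = J := by
    intro K hK hyK
    have h0 : lin a (eInd K) + c = W (eInd K) := by
      rw [hW K hK]
      simp only [hydef] at hyK
      linarith
    rcases huniq (eInd K) ⟨K, hK, rfl⟩ h0 with h | h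
    · exact Or.inl (eInd_inj h)
    · exact Or.inr (eInd_inj h)
  -- I ≠ J, so I \ J is nonempty
  have hIJ : I ≠ J := fun h => hne (by rw [h])
  have hne' : (I \ J).Nonempty := by
    rw [Finset.sdiff_nonempty]
    intro hsub
    exact hIJ (Finset.eq_of_subset_of_card_le hsub (by omega))
  obtain ⟨i, hi⟩ := hne'
  obtain ⟨hiI, hiJ⟩ := Finset.mem_sdiff.mp hi
  -- apply the exchange lemma
  obtain ⟨j, hjJI, hle⟩ := exchange y hyP (I \ J).card I J hI hJ rfl i hi
  obtain ⟨hjJ, hjI⟩ := Finset.mem_sdiff.mp hjJI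
  have hijne : i ≠ j := fun h => hjI (h ▸ hiI)
  have hK1card : (insert j (I.erase i)).card = d := by
    rw [Finset.card_insert_of_notMem (fun h => hjI (Finset.mem_of_mem_erase h)),
      Finset.card_erase_of_mem hiI, hI]
    omega
  have hK2card : (insert i (J.erase j)).card = d := by
    rw [Finset.card_insert_of_notMem (fun h => hiJ (Finset.mem_of_mem_erase h)),
      Finset.card_erase_of_mem hjJ, hJ]
    omega
  have h1 : y (insert j (I.erase i)) = 0 := by
    have := ynn _ hK1card
    have := ynn _ hK2card
    linarith
  have hK1 : insert j (I.erase i) = J := by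
    rcases yzero _ hK1card h1 with h | h
    · exact absurd (h ▸ Finset.mem_insert_self j (I.erase i)) hjI
    · exact h
  have : I \ J = {i} := by
    ext t
    simp only [Finset.mem_sdiff, Finset.mem_singleton, ← hK1,
      Finset.mem_insert, Finset.mem_erase]
    constructor
    · rintro ⟨htI, hnot⟩
      push_neg at hnot
      by_contra hti
      exact hnot.2 hti htI
    · rintro rfl
      refine ⟨hiI, ?_⟩
      rintro (rfl | ⟨h, _⟩)
      · exact hjI hiI
      · exact h rfl
  rw [this, Finset.card_singleton]
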